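/- Let α > 1 and let P ⊂ ℝ be finite with 0 ∈ P (source 0). Define the standard-range assignment σ by: for p ∈ P with p > 0, σ(p) = min{q ∈ P : q > p} − p if a larger point exists and σ(p) = 0 otherwise; for p ∈ P with p < 0, σ(p) = p − max{q ∈ P : q < p} if a smaller point exists and σ(p) = 0 otherwise; and σ(0) is the maximum of the distance from 0 to its nearest point on the right (0 if none) and the distance from 0 to its nearest point on the left (0 if none). Then σ is a feasible broadcast range assignment for P with source 0, and cost_α(σ) ≤ 2·opt_α(P). (This is the 2-stable 2-approximation standard-range algorithm.) -/

import Mathlib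

open Finset

attribute [local instance] Classical.propDecidable

/-- A range assignment `ρ` for a finite point set `P` with source `s` is *feasible* if it is
nonnegative on `P` and every point of `P` is reachable from `s` via a sequence of points of `P`
in which each step is within the range of its starting point. -/
def Feasible {X : Type*} [MetricSpace X] (P : Finset X) (s : X) (ρ : X → ℝ) : Prop :=
  (∀ p ∈ P, 0 ≤ ρ p) ∧
  ∀ p ∈ P, ∃ (m : ℕ) (f : ℕ → X), f 0 = s ∧ f m = p ∧ (∀ i ≤ m, f i ∈ P) ∧
    ∀ i < m, dist (f i) (f (i + 1)) ≤ ρ (f i)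

/-- The cost `∑_{p ∈ P} ρ(p)^α` of a range assignment. -/
noncomputable def cost {X : Type*} (α : ℝ) (P : Finset X) (ρ : X → ℝ) : ℝ :=
  ∑ p ∈ P, ρ p ^ α

/-- The optimal broadcast cost: the infimum of `cost α P ρ` over feasible `ρ`. -/
noncomputable def opt {X : Type*} [MetricSpace X] (α : ℝ) (P : Finset X) (s : X) : ℝ :=
  sInf {c : ℝ | ∃ ρ : X → ℝ, Feasible P s ρ ∧ cost α P ρ = c}

/-- The standard-range assignment: every point gets the distance to its successor (0 if none),
and the source gets the larger of its distances to its nearest neighbours on either side. -/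
noncomputable def standardAssignment (P : Finset ℝ) : ℝ → ℝ := fun p =>
  if 0 < p then (if ∃ q ∈ P, p < q then sInf {q | q ∈ P ∧ p < q} - p else 0)
  else if p < 0 then (if ∃ q ∈ P, q < p then p - sSup {q | q ∈ P ∧ q < p} else 0)
  else
    max (if ∃ q ∈ P, (0:ℝ) < q then sInf {q | q ∈ P ∧ (0:ℝ) < q} else 0)
      (if ∃ q ∈ P, q < (0:ℝ) then -sSup {q | q ∈ P ∧ q < (0:ℝ)} else 0)

namespace StdRange

noncomputable def Succ (P : Finset ℝ) (p : ℝ) : ℝ := sInf {q | q ∈ P ∧ p < q}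
noncomputable def Pred (P : Finset ℝ) (p : ℝ) : ℝ := sSup {q | q ∈ P ∧ q < p}

lemma succSet_finite (P : Finset ℝ) (p : ℝ) : {q | q ∈ P ∧ p < q}.Finite :=
  P.finite_toSet.subset fun _ hq => hq.1

lemma predSet_finite (P : Finset ℝ) (p : ℝ) : {q | q ∈ P ∧ q < p}.Finite :=
  P.finite_toSet.subset fun _ hq => hq.1

lemma succ_mem {P : Finset ℝ} {p : ℝ} (hex : ∃ q ∈ P, p < q) :
    Succ P p ∈ P ∧ p < Succ P p := by
  obtain ⟨q, hq, hpq⟩ := hex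
  have hne : Set.Nonempty {q | q ∈ P ∧ p < q} := ⟨q, hq, hpq⟩
  have h := Set.Nonempty.csInf_mem hne (succSet_finite P p)
  exact ⟨h.1, h.2⟩

lemma succ_le {P : Finset ℝ} {p q : ℝ} (hq : q ∈ P) (hpq : p < q) : Succ P p ≤ q :=
  csInf_le (Set.Finite.bddBelow (succSet_finite P p)) ⟨hq, hpq⟩

lemma pred_mem {P : Finset ℝ} {p : ℝ} (hex : ∃ q ∈ P, q < p) :
    Pred P p ∈ P ∧ Pred P p < p := by
  obtain ⟨q, hq, hpq⟩ := hex
  have hne : Set.Nonempty {q | q ∈ P ∧ q < p} := ⟨q, hq, hpq⟩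
  have h := Set.Nonempty.csSup_mem hne (predSet_finite P p)
  exact ⟨h.1, h.2⟩

lemma le_pred {P : Finset ℝ} {p q : ℝ} (hq : q ∈ P) (hpq : q < p) : q ≤ Pred P p :=
  le_csSup (Set.Finite.bddAbove (predSet_finite P p)) ⟨hq, hpq⟩

noncomputable def gapR (P : Finset ℝ) (p : ℝ) : ℝ :=
  if ∃ q ∈ P, p < q then Succ P p - p else 0

noncomputable def gapL (P : Finset ℝ) (p : ℝ) : ℝ :=
  if ∃ q ∈ P, q < p then p - Pred P p else 0

lemma gapR_nonneg (P : Finset ℝ) (p : ℝ) : 0 ≤ gapR P p := by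
  unfold gapR
  split_ifs with h
  · have := (succ_mem h).2; linarith
  · exact le_refl 0

lemma gapL_nonneg (P : Finset ℝ) (p : ℝ) : 0 ≤ gapL P p := by
  unfold gapL
  split_ifs with h
  · have := (pred_mem h).2; linarith
  · exact le_refl 0

lemma sa_pos {P : Finset ℝ} {p : ℝ} (hp : 0 < p) : standardAssignment P p = gapR P p := by
  unfold standardAssignment gapR Succ
  rw [if_pos hp]

lemma sa_neg {P : Finset ℝ} {p : ℝ} (hp : p < 0) : standardAssignment P p = gapL P p := by
  unfold standardAssignment gapL Pred
  rw [if_neg (asymm hp), if_pos hp]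

lemma sa_zero (P : Finset ℝ) :
    standardAssignment P 0 = max (gapR P 0) (gapL P 0) := by
  unfold standardAssignment gapR gapL Succ Pred
  rw [if_neg (lt_irrefl (0:ℝ))]
  simp [sub_zero, zero_sub]

lemma sa_nonneg (P : Finset ℝ) (p : ℝ) : 0 ≤ standardAssignment P p := by
  rcases lt_trichotomy p 0 with h | h | h
  · rw [sa_neg h]; exact gapL_nonneg P p
  · subst h; rw [sa_zero]; exact le_trans (gapR_nonneg P 0) (le_max_left _ _)
  · rw [sa_pos h]; exact gapR_nonneg P p

/-! ### Feasibility -/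

lemma no_between_stepR {P : Finset ℝ} {r p : ℝ} (h0r : 0 ≤ r) (hp : p ∈ P)
    (hrp : r < p) (hmax : ∀ q ∈ P, q < p → q ≤ r) :
    p - r ≤ standardAssignment P r := by
  have hex : ∃ q ∈ P, r < q := ⟨p, hp, hrp⟩
  have hple : p ≤ Succ P r := by
    obtain ⟨hmem, hgt⟩ := succ_mem hex
    by_contra h
    push_neg at h
    exact absurd (hmax _ hmem h) (not_le.2 hgt)
  rcases h0r.lt_or_eq with h0r' | h0r'
  · rw [sa_pos h0r', gapR, if_pos hex]; linarith
  · rw [← h0r'] at hex hple hrp ⊢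
    rw [sa_zero]
    refine le_trans ?_ (le_max_left _ _)
    rw [gapR, if_pos hex]
    linarith

lemma no_between_stepL {P : Finset ℝ} {r p : ℝ} (h0r : r ≤ 0) (hp : p ∈ P)
    (hrp : p < r) (hmin : ∀ q ∈ P, p < q → r ≤ q) :
    r - p ≤ standardAssignment P r := by
  have hex : ∃ q ∈ P, q < r := ⟨p, hp, hrp⟩
  have hple : Pred P r ≤ p := by
    obtain ⟨hmem, hgt⟩ := pred_mem hex
    by_contra h
    push_neg at h
    exact absurd (hmin _ hmem h) (not_le.2 hgt)
  rcases h0r.lt_or_eq with h0r' | h0r'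
  · rw [sa_neg h0r', gapL, if_pos hex]; linarith
  · rw [h0r'] at hex hple hrp ⊢
    rw [sa_zero]
    refine le_trans ?_ (le_max_right _ _)
    rw [gapL, if_pos hex]
    linarith

lemma reachR {P : Finset ℝ} (hP : (0:ℝ) ∈ P) :
    ∀ n : ℕ, ∀ p : ℝ, p ∈ P → 0 ≤ p → (P.filter (fun q => 0 ≤ q ∧ q < p)).card ≤ n →
    ∃ (m : ℕ) (f : ℕ → ℝ), f 0 = 0 ∧ f m = p ∧ (∀ i ≤ m, f i ∈ P) ∧
      ∀ i < m, dist (f i) (f (i + 1)) ≤ standardAssignment P (f i) := by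
  intro n
  induction n with
  | zero =>
    intro p hp h0p hcard
    have hp0 : (0:ℝ) = p := by
      by_contra h
      have hlt : 0 < p := lt_of_le_of_ne h0p h
      have hmem : (0:ℝ) ∈ P.filter (fun q => 0 ≤ q ∧ q < p) :=
        mem_filter.2 ⟨hP, le_refl _, hlt⟩
      have := card_pos.2 ⟨_, hmem⟩
      omega
    exact ⟨0, fun _ => 0, rfl, hp0, fun i _ => hP, fun i h => absurd h (Nat.not_lt_zero i)⟩
  | succ n ih =>
    intro p hp h0p hcard
    rcases h0p.lt_or_eq with hlt | heq
    · set r := Pred P p with hr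
      have hexr : ∃ q ∈ P, q < p := ⟨0, hP, hlt⟩
      obtain ⟨hrP, hrlt⟩ := pred_mem hexr
      have h0r : 0 ≤ r := le_pred hP hlt
      have hmax : ∀ q ∈ P, q < p → q ≤ r := fun q hq hqp => le_pred hq hqp
      have hsub : P.filter (fun q => 0 ≤ q ∧ q < r) ⊆ P.filter (fun q => 0 ≤ q ∧ q < p) := by
        intro x hx
        rw [mem_filter] at hx ⊢
        exact ⟨hx.1, hx.2.1, hx.2.2.trans hrlt⟩
      have hrmem : r ∈ P.filter (fun q => 0 ≤ q ∧ q < p) := mem_filter.2 ⟨hrP, h0r, hrlt⟩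
      have hrnot : r ∉ P.filter (fun q => 0 ≤ q ∧ q < r) := by
        simp [mem_filter, lt_irrefl]
      have hlt_card : (P.filter (fun q => 0 ≤ q ∧ q < r)).card <
          (P.filter (fun q => 0 ≤ q ∧ q < p)).card :=
        card_lt_card ((Finset.ssubset_iff_of_subset hsub).2 ⟨r, hrmem, hrnot⟩)
      obtain ⟨m, f, hf0, hfm, hfP, hstep⟩ := ih r hrP h0r (by omega)
      refine ⟨m + 1, fun i => if i ≤ m then f i else p, by simp [hf0], by simp, ?_, ?_⟩
      · intro i hi
        by_cases him : i ≤ m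
        · simpa [him] using hfP i him
        · simpa [him] using hp
      · intro i hi
        by_cases him : i < m
        · have h1 : i ≤ m := him.le
          have h2 : i + 1 ≤ m := him
          simpa only [if_pos h1, if_pos h2] using hstep i him
        · have hieq : i = m := by omega
          subst hieq
          simp only [if_pos (le_refl i), if_neg (by omega : ¬ i + 1 ≤ i)]
          rw [hfm, Real.dist_eq, abs_of_nonpos (by linarith)]
          have := no_between_stepR h0r hp hrlt hmax
          linarith
    · exact ⟨0, fun _ => 0, rfl, heq, fun i _ => hP, fun i h => absurd h (Nat.not_lt_zero i)⟩

lemma reachL {P : Finset ℝ} (hP : (0:ℝ) ∈ P) :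
    ∀ n : ℕ, ∀ p : ℝ, p ∈ P → p ≤ 0 → (P.filter (fun q => q ≤ 0 ∧ p < q)).card ≤ n →
    ∃ (m : ℕ) (f : ℕ → ℝ), f 0 = 0 ∧ f m = p ∧ (∀ i ≤ m, f i ∈ P) ∧
      ∀ i < m, dist (f i) (f (i + 1)) ≤ standardAssignment P (f i) := by
  intro n
  induction n with
  | zero =>
    intro p hp h0p hcard
    have hp0 : (0:ℝ) = p := by
      by_contra h
      have hlt : p < 0 := lt_of_le_of_ne h0p (fun e => h e.symm)
      have hmem : (0:ℝ) ∈ P.filter (fun q => q ≤ 0 ∧ p < q) :=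
        mem_filter.2 ⟨hP, le_refl _, hlt⟩
      have := card_pos.2 ⟨_, hmem⟩
      omega
    exact ⟨0, fun _ => 0, rfl, hp0, fun i _ => hP, fun i h => absurd h (Nat.not_lt_zero i)⟩
  | succ n ih =>
    intro p hp h0p hcard
    rcases h0p.lt_or_eq with hlt | heq
    · set r := Succ P p with hr
      have hexr : ∃ q ∈ P, p < q := ⟨0, hP, hlt⟩
      obtain ⟨hrP, hrlt⟩ := succ_mem hexr
      have h0r : r ≤ 0 := succ_le hP hlt
      have hmin : ∀ q ∈ P, p < q → r ≤ q := fun q hq hqp => succ_le hq hqp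
      have hsub : P.filter (fun q => q ≤ 0 ∧ r < q) ⊆ P.filter (fun q => q ≤ 0 ∧ p < q) := by
        intro x hx
        rw [mem_filter] at hx ⊢
        exact ⟨hx.1, hx.2.1, hrlt.trans hx.2.2⟩
      have hrmem : r ∈ P.filter (fun q => q ≤ 0 ∧ p < q) := mem_filter.2 ⟨hrP, h0r, hrlt⟩
      have hrnot : r ∉ P.filter (fun q => q ≤ 0 ∧ r < q) := by
        simp [mem_filter, lt_irrefl]
      have hlt_card : (P.filter (fun q => q ≤ 0 ∧ r < q)).card <
          (P.filter (fun q => q ≤ 0 ∧ p < q)).card :=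
        card_lt_card ((Finset.ssubset_iff_of_subset hsub).2 ⟨r, hrmem, hrnot⟩)
      obtain ⟨m, f, hf0, hfm, hfP, hstep⟩ := ih r hrP h0r (by omega)
      refine ⟨m + 1, fun i => if i ≤ m then f i else p, by simp [hf0], by simp, ?_, ?_⟩
      · intro i hi
        by_cases him : i ≤ m
        · simpa [him] using hfP i him
        · simpa [him] using hp
      · intro i hi
        by_cases him : i < m
        · have h1 : i ≤ m := him.le
          have h2 : i + 1 ≤ m := him
          simpa only [if_pos h1, if_pos h2] using hstep i him
        · have hieq : i = m := by omega
          subst hieq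
          simp only [if_pos (le_refl i), if_neg (by omega : ¬ i + 1 ≤ i)]
          rw [hfm, Real.dist_eq, abs_of_nonneg (by linarith)]
          have := no_between_stepL h0r hp hrlt hmin
          linarith
    · exact ⟨0, fun _ => 0, rfl, heq.symm, fun i _ => hP, fun i h => absurd h (Nat.not_lt_zero i)⟩

lemma sa_feasible (P : Finset ℝ) (hP : (0:ℝ) ∈ P) : Feasible P 0 (standardAssignment P) := by
  refine ⟨fun p _ => sa_nonneg P p, fun p hp => ?_⟩
  rcases le_total 0 p with h | h
  · exact reachR hP _ p hp h (le_refl _)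
  · exact reachL hP _ p hp h (le_refl _)

/-! ### Lower bound for any feasible assignment -/

lemma crossing_indexR (f : ℕ → ℝ) (p : ℝ) :
    ∀ m : ℕ, f 0 ≤ p → p < f m → ∃ j < m, f j ≤ p ∧ p < f (j + 1) := by
  intro m
  induction m with
  | zero => intro h1 h2; exact absurd (h1.trans_lt h2) (lt_irrefl _)
  | succ m ih =>
    intro h1 h2
    by_cases hm : f m ≤ p
    · exact ⟨m, Nat.lt_succ_self m, hm, h2⟩
    · obtain ⟨j, hj, hj1, hj2⟩ := ih h1 (not_le.1 hm)
      exact ⟨j, hj.trans (Nat.lt_succ_self m), hj1, hj2⟩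

lemma crossing_indexL (f : ℕ → ℝ) (p : ℝ) :
    ∀ m : ℕ, p ≤ f 0 → f m < p → ∃ j < m, p ≤ f j ∧ f (j + 1) < p := by
  intro m
  induction m with
  | zero => intro h1 h2; exact absurd (h2.trans_le h1) (lt_irrefl _)
  | succ m ih =>
    intro h1 h2
    by_cases hm : p ≤ f m
    · exact ⟨m, Nat.lt_succ_self m, hm, h2⟩
    · obtain ⟨j, hj, hj1, hj2⟩ := ih h1 (not_le.1 hm)
      exact ⟨j, hj.trans (Nat.lt_succ_self m), hj1, hj2⟩

lemma crossR {P : Finset ℝ} {ρ : ℝ → ℝ} (hfeas : Feasible P 0 ρ) {p : ℝ}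
    (h0p : 0 ≤ p) (hex : ∃ q ∈ P, p < q) :
    ∃ q, q ∈ P ∧ q ≤ p ∧ Succ P p ≤ q + ρ q := by
  obtain ⟨hsmem, hsgt⟩ := succ_mem hex
  obtain ⟨m, f, hf0, hfm, hfP, hstep⟩ := hfeas.2 (Succ P p) hsmem
  obtain ⟨j, hjm, hj1, hj2⟩ := crossing_indexR f p m (by rw [hf0]; exact h0p)
    (by rw [hfm]; exact hsgt)
  refine ⟨f j, hfP j hjm.le, hj1, ?_⟩
  have h1 : Succ P p ≤ f (j + 1) := succ_le (hfP (j + 1) hjm) hj2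
  have h2 : dist (f j) (f (j + 1)) ≤ ρ (f j) := hstep j hjm
  rw [Real.dist_eq] at h2
  have h3 : f (j + 1) - f j ≤ |f j - f (j + 1)| := by
    rw [abs_sub_comm]; exact le_abs_self _
  linarith

lemma crossL {P : Finset ℝ} {ρ : ℝ → ℝ} (hfeas : Feasible P 0 ρ) {p : ℝ}
    (h0p : p ≤ 0) (hex : ∃ q ∈ P, q < p) :
    ∃ q, q ∈ P ∧ p ≤ q ∧ q - ρ q ≤ Pred P p := by
  obtain ⟨hsmem, hsgt⟩ := pred_mem hex
  obtain ⟨m, f, hf0, hfm, hfP, hstep⟩ := hfeas.2 (Pred P p) hsmem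
  obtain ⟨j, hjm, hj1, hj2⟩ := crossing_indexL f p m (by rw [hf0]; exact h0p)
    (by rw [hfm]; exact hsgt)
  refine ⟨f j, hfP j hjm.le, hj1, ?_⟩
  have h1 : f (j + 1) ≤ Pred P p := le_pred (hfP (j + 1) hjm) hj2
  have h2 : dist (f j) (f (j + 1)) ≤ ρ (f j) := hstep j hjm
  rw [Real.dist_eq] at h2
  have h3 : f j - f (j + 1) ≤ |f j - f (j + 1)| := le_abs_self _
  linarith

lemma add_rpow_le {x y : ℝ} (hx : 0 ≤ x) (hy : 0 ≤ y) {α : ℝ} (hα : 1 ≤ α) :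
    x ^ α + y ^ α ≤ (x + y) ^ α := by
  lift x to NNReal using hx
  lift y to NNReal using hy
  exact_mod_cast NNReal.add_rpow_le_rpow_add x y hα

lemma sum_rpow_le {ι : Type*} {α : ℝ} (hα : 1 ≤ α) (s : Finset ι) (g : ι → ℝ) :
    (∀ i ∈ s, 0 ≤ g i) → ∑ i ∈ s, g i ^ α ≤ (∑ i ∈ s, g i) ^ α := by
  induction s using Finset.induction_on with
  | empty => intro _; simp [Real.zero_rpow (by linarith : α ≠ 0)]
  | @insert a s ha ih =>
    intro hg
    rw [sum_insert ha, sum_insert ha]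
    have h1 : 0 ≤ g a := hg a (mem_insert_self _ _)
    have h2 : ∀ i ∈ s, 0 ≤ g i := fun i hi => hg i (mem_insert_of_mem hi)
    have h3 : 0 ≤ ∑ i ∈ s, g i := sum_nonneg h2
    calc g a ^ α + ∑ i ∈ s, g i ^ α ≤ g a ^ α + (∑ i ∈ s, g i) ^ α := by linarith [ih h2]
      _ ≤ (g a + ∑ i ∈ s, g i) ^ α := add_rpow_le h1 h3 hα

lemma telescopeR (P : Finset ℝ) (T : Finset ℝ) :
    ∀ b B : ℝ, b ≤ B →
      (∀ p ∈ T, p ∈ P ∧ (∃ r ∈ P, p < r) ∧ b ≤ p ∧ Succ P p ≤ B) →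
      ∑ p ∈ T, (Succ P p - p) ≤ B - b := by
  induction T using Finset.induction_on_max with
  | empty => intro b B hbB _; simp only [sum_empty]; linarith
  | insert a s hlt ih =>
    intro b B hbB hmem
    obtain ⟨haP, hexa, hba, hSa⟩ := hmem a (mem_insert_self a s)
    have hanot : a ∉ s := fun h => lt_irrefl a (hlt a h)
    rw [sum_insert hanot]
    have hs : ∑ p ∈ s, (Succ P p - p) ≤ min a B - b := by
      refine ih b (min a B) (le_min hba hbB) ?_
      intro p hp
      obtain ⟨hpP, hexp, hbp, hSp⟩ := hmem p (mem_insert_of_mem hp)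
      exact ⟨hpP, hexp, hbp, le_min (succ_le haP (hlt p hp)) hSp⟩
    have hmin : min a B ≤ a := min_le_left a B
    linarith

lemma telescopeL (P : Finset ℝ) (T : Finset ℝ) :
    ∀ b B : ℝ, b ≤ B →
      (∀ p ∈ T, p ∈ P ∧ (∃ r ∈ P, r < p) ∧ p ≤ B ∧ b ≤ Pred P p) →
      ∑ p ∈ T, (p - Pred P p) ≤ B - b := by
  induction T using Finset.induction_on_min with
  | empty => intro b B hbB _; simp only [sum_empty]; linarith
  | insert a s hlt ih =>
    intro b B hbB hmem
    obtain ⟨haP, hexa, hBa, hPa⟩ := hmem a (mem_insert_self a s)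
    have hanot : a ∉ s := fun h => lt_irrefl a (hlt a h)
    rw [sum_insert hanot]
    have hs : ∑ p ∈ s, (p - Pred P p) ≤ B - max a b := by
      refine ih (max a b) B (max_le hBa hbB) ?_
      intro p hp
      obtain ⟨hpP, hexp, hBp, hbp⟩ := hmem p (mem_insert_of_mem hp)
      exact ⟨hpP, hexp, hBp, max_le (le_pred haP (hlt p hp)) hbp⟩
    have hmax : a ≤ max a b := le_max_left a b
    linarith

lemma claimR {α : ℝ} (hα : 1 < α) {P : Finset ℝ} {ρ : ℝ → ℝ}
    (hfeas : Feasible P 0 ρ) :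
    ∑ p ∈ P.filter (fun p => 0 ≤ p), gapR P p ^ α ≤ cost α P ρ := by
  set R' := P.filter (fun p => 0 ≤ p ∧ ∃ q ∈ P, p < q) with hR'
  have hsum : ∑ p ∈ P.filter (fun p => 0 ≤ p), gapR P p ^ α = ∑ p ∈ R', gapR P p ^ α := by
    refine (Finset.sum_subset ?_ ?_).symm
    · intro x hx
      rw [mem_filter] at hx ⊢
      exact ⟨hx.1, hx.2.1⟩
    · intro x hx hnx
      have hno : ¬ ∃ q ∈ P, x < q := fun hex =>
        hnx (mem_filter.2 ⟨(mem_filter.1 hx).1, (mem_filter.1 hx).2, hex⟩)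
      rw [gapR, if_neg hno, Real.zero_rpow (by linarith : α ≠ 0)]
  rw [hsum]
  have hchoice : ∀ p : ℝ, ∃ q, p ∈ R' → q ∈ P ∧ q ≤ p ∧ Succ P p ≤ q + ρ q := by
    intro p
    by_cases hpR : p ∈ R'
    · obtain ⟨_, h0p, hex⟩ := mem_filter.1 hpR
      obtain ⟨q, hq⟩ := crossR hfeas h0p hex
      exact ⟨q, fun _ => hq⟩
    · exact ⟨0, fun h => absurd h hpR⟩
  choose c hc using hchoice
  rw [← Finset.sum_fiberwise_of_maps_to (fun p hp => (hc p hp).1) (fun p => gapR P p ^ α)]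
  unfold cost
  refine Finset.sum_le_sum ?_
  intro q hq
  have hρq : 0 ≤ ρ q := hfeas.1 q hq
  set T := R'.filter (fun p => c p = q) with hT
  have hmemT : ∀ p ∈ T, p ∈ R' ∧ c p = q := fun p hp =>
    ⟨(mem_filter.1 hp).1, (mem_filter.1 hp).2⟩
  have hgap : ∀ p ∈ T, gapR P p = Succ P p - p := by
    intro p hp
    have hex := (mem_filter.1 (hmemT p hp).1).2.2
    rw [gapR, if_pos hex]
  have hnn : ∀ p ∈ T, 0 ≤ Succ P p - p := by
    intro p hp
    have hex := (mem_filter.1 (hmemT p hp).1).2.2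
    have := (succ_mem hex).2
    linarith
  have hsum2 : ∑ p ∈ T, (Succ P p - p) ≤ ρ q := by
    have h := telescopeR P T q (q + ρ q) (by linarith) ?_
    · linarith
    · intro p hp
      obtain ⟨hpR, hcq⟩ := hmemT p hp
      obtain ⟨hpP, h0p, hex⟩ := mem_filter.1 hpR
      obtain ⟨hcP, hcle, hcsucc⟩ := hc p hpR
      rw [hcq] at hcle hcsucc
      exact ⟨hpP, hex, hcle, hcsucc⟩
  calc ∑ p ∈ T, gapR P p ^ α = ∑ p ∈ T, (Succ P p - p) ^ α :=
        Finset.sum_congr rfl (fun p hp => by rw [hgap p hp])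
    _ ≤ (∑ p ∈ T, (Succ P p - p)) ^ α := sum_rpow_le hα.le T _ hnn
    _ ≤ ρ q ^ α := Real.rpow_le_rpow (sum_nonneg hnn) hsum2 (by linarith)

lemma claimL {α : ℝ} (hα : 1 < α) {P : Finset ℝ} {ρ : ℝ → ℝ}
    (hfeas : Feasible P 0 ρ) :
    ∑ p ∈ P.filter (fun p => p ≤ 0), gapL P p ^ α ≤ cost α P ρ := by
  set R' := P.filter (fun p => p ≤ 0 ∧ ∃ q ∈ P, q < p) with hR'
  have hsum : ∑ p ∈ P.filter (fun p => p ≤ 0), gapL P p ^ α = ∑ p ∈ R', gapL P p ^ α := by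
    refine (Finset.sum_subset ?_ ?_).symm
    · intro x hx
      rw [mem_filter] at hx ⊢
      exact ⟨hx.1, hx.2.1⟩
    · intro x hx hnx
      have hno : ¬ ∃ q ∈ P, q < x := fun hex =>
        hnx (mem_filter.2 ⟨(mem_filter.1 hx).1, (mem_filter.1 hx).2, hex⟩)
      rw [gapL, if_neg hno, Real.zero_rpow (by linarith : α ≠ 0)]
  rw [hsum]
  have hchoice : ∀ p : ℝ, ∃ q, p ∈ R' → q ∈ P ∧ p ≤ q ∧ q - ρ q ≤ Pred P p := by
    intro p
    by_cases hpR : p ∈ R'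
    · obtain ⟨_, h0p, hex⟩ := mem_filter.1 hpR
      obtain ⟨q, hq⟩ := crossL hfeas h0p hex
      exact ⟨q, fun _ => hq⟩
    · exact ⟨0, fun h => absurd h hpR⟩
  choose c hc using hchoice
  rw [← Finset.sum_fiberwise_of_maps_to (fun p hp => (hc p hp).1) (fun p => gapL P p ^ α)]
  unfold cost
  refine Finset.sum_le_sum ?_
  intro q hq
  have hρq : 0 ≤ ρ q := hfeas.1 q hq
  set T := R'.filter (fun p => c p = q) with hT
  have hmemT : ∀ p ∈ T, p ∈ R' ∧ c p = q := fun p hp =>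
    ⟨(mem_filter.1 hp).1, (mem_filter.1 hp).2⟩
  have hgap : ∀ p ∈ T, gapL P p = p - Pred P p := by
    intro p hp
    have hex := (mem_filter.1 (hmemT p hp).1).2.2
    rw [gapL, if_pos hex]
  have hnn : ∀ p ∈ T, 0 ≤ p - Pred P p := by
    intro p hp
    have hex := (mem_filter.1 (hmemT p hp).1).2.2
    have := (pred_mem hex).2
    linarith
  have hsum2 : ∑ p ∈ T, (p - Pred P p) ≤ ρ q := by
    have h := telescopeL P T (q - ρ q) q (by linarith) ?_
    · linarith
    · intro p hp
      obtain ⟨hpR, hcq⟩ := hmemT p hp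
      obtain ⟨hpP, h0p, hex⟩ := mem_filter.1 hpR
      obtain ⟨hcP, hcle, hcpred⟩ := hc p hpR
      rw [hcq] at hcle hcpred
      exact ⟨hpP, hex, hcle, hcpred⟩
  calc ∑ p ∈ T, gapL P p ^ α = ∑ p ∈ T, (p - Pred P p) ^ α :=
        Finset.sum_congr rfl (fun p hp => by rw [hgap p hp])
    _ ≤ (∑ p ∈ T, (p - Pred P p)) ^ α := sum_rpow_le hα.le T _ hnn
    _ ≤ ρ q ^ α := Real.rpow_le_rpow (sum_nonneg hnn) hsum2 (by linarith)

lemma cost_split {α : ℝ} (hα : 1 < α) (P : Finset ℝ) :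
    cost α P (standardAssignment P) ≤
      (∑ p ∈ P.filter (fun p => 0 ≤ p), gapR P p ^ α) +
      (∑ p ∈ P.filter (fun p => p ≤ 0), gapL P p ^ α) := by
  rw [Finset.sum_filter, Finset.sum_filter]
  unfold cost
  rw [← Finset.sum_add_distrib]
  refine Finset.sum_le_sum ?_
  intro p _
  rcases lt_trichotomy p 0 with h | h | h
  · rw [sa_neg h, if_neg (not_le.2 h), if_pos h.le, zero_add]
  · subst h
    rw [sa_zero, if_pos (le_refl (0:ℝ)), if_pos (le_refl (0:ℝ))]
    rcases max_choice (gapR P 0) (gapL P 0) with hm | hm <;> rw [hm]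
    · have : (0:ℝ) ≤ gapL P 0 ^ α := Real.rpow_nonneg (gapL_nonneg P 0) α
      linarith
    · have : (0:ℝ) ≤ gapR P 0 ^ α := Real.rpow_nonneg (gapR_nonneg P 0) α
      linarith
  · rw [sa_pos h, if_pos h.le, if_neg (not_le.2 h), add_zero]

end StdRange

open StdRange

/-- The standard-range assignment is a feasible broadcast range assignment
and a 2-approximation for every distance-power gradient α > 1. -/
theorem standard_range_two_approx (α : ℝ) (hα : 1 < α)
    (P : Finset ℝ) (hP : (0:ℝ) ∈ P) :
    Feasible P 0 (standardAssignment P) ∧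
    cost α P (standardAssignment P) ≤ 2 * opt α P 0 := by
  have hfeas := sa_feasible P hP
  refine ⟨hfeas, ?_⟩
  have hkey : ∀ ρ : ℝ → ℝ, Feasible P 0 ρ →
      cost α P (standardAssignment P) ≤ 2 * cost α P ρ := by
    intro ρ hρ
    have h1 := claimR hα hρ
    have h2 := claimL hα hρ
    have h3 := cost_split hα P
    linarith
  have hne : {c : ℝ | ∃ ρ, Feasible P 0 ρ ∧ cost α P ρ = c}.Nonempty :=
    ⟨cost α P (standardAssignment P), standardAssignment P, hfeas, rfl⟩
  have hlb : ∀ c ∈ {c : ℝ | ∃ ρ, Feasible P 0 ρ ∧ cost α P ρ = c},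
      cost α P (standardAssignment P) / 2 ≤ c := by
    rintro c ⟨ρ, hρ, rfl⟩
    linarith [hkey ρ hρ]
  have hopt : cost α P (standardAssignment P) / 2 ≤ opt α P 0 := le_csInf hne hlb
  linarith
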